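/- For all x > 0, (sinh x)/x < (cosh(x/3))^{3}. -/

import Mathlib

open Real Set

lemma aux_tanh (t : ℝ) (ht : 0 < t) : Real.sinh t < t * Real.cosh t := by
  have H : StrictMonoOn (fun t : ℝ => t * Real.cosh t - Real.sinh t) (Set.Ici 0) := by
    apply strictMonoOn_of_deriv_pos (convex_Ici 0)
    · fun_prop
    · intro y hy
      rw [interior_Ici] at hy
      have h1 : HasDerivAt (fun t : ℝ => t * Real.cosh t - Real.sinh t)
          (1 * Real.cosh y + y * Real.sinh y - Real.cosh y) y := by
        exact ((hasDerivAt_id y).mul (Real.hasDerivAt_cosh y)).sub (Real.hasDerivAt_sinh y)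
      rw [h1.deriv]
      have hy' : 0 < y := hy
      have hs := Real.sinh_pos_iff.2 hy'
      nlinarith [mul_pos hy' hs]
  have := H (Set.self_mem_Ici) (le_of_lt ht : (0:ℝ) ≤ t) ht
  simp at this
  linarith

lemma aux_main (x : ℝ) (hx : 0 < x) : Real.sinh x < x * (Real.cosh (x / 3)) ^ 3 := by
  have H : StrictMonoOn (fun x : ℝ => x * (Real.cosh (x / 3)) ^ 3 - Real.sinh x) (Set.Ici 0) := by
    apply strictMonoOn_of_deriv_pos (convex_Ici 0)
    · fun_prop
    · intro y hy
      rw [interior_Ici] at hy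
      have hc : HasDerivAt (fun x : ℝ => Real.cosh (x / 3)) (Real.sinh (y / 3) * (1 / 3)) y := by
        have := (Real.hasDerivAt_cosh (y / 3)).comp y
          ((hasDerivAt_id y).div_const 3)
        simpa [Function.comp_def] using this
      have hc3 : HasDerivAt (fun x : ℝ => (Real.cosh (x / 3)) ^ 3)
          (3 * (Real.cosh (y / 3)) ^ 2 * (Real.sinh (y / 3) * (1 / 3))) y := by
        simpa using hc.fun_pow 3
      have h1 : HasDerivAt (fun x : ℝ => x * (Real.cosh (x / 3)) ^ 3 - Real.sinh x)
          (1 * (Real.cosh (y / 3)) ^ 3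
            + y * (3 * (Real.cosh (y / 3)) ^ 2 * (Real.sinh (y / 3) * (1 / 3)))
            - Real.cosh y) y :=
        ((hasDerivAt_id y).mul hc3).sub (Real.hasDerivAt_sinh y)
      rw [h1.deriv]
      have hy3 : Real.cosh y = 4 * Real.cosh (y / 3) ^ 3 - 3 * Real.cosh (y / 3) := by
        rw [← Real.cosh_three_mul]; congr 1; ring
      have hy' : 0 < y := hy
      have ht : 0 < y / 3 := by linarith
      have hs := Real.sinh_pos_iff.2 ht
      have hcpos := Real.cosh_pos (y / 3)
      have htanh := aux_tanh (y / 3) ht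
      have hsq : Real.cosh (y / 3) ^ 2 = Real.sinh (y / 3) ^ 2 + 1 := Real.cosh_sq (y / 3)
      rw [hy3]
      nlinarith [mul_pos hs (mul_pos hcpos (sub_pos.2 htanh)),
        mul_pos hcpos hs]
  have := H (Set.self_mem_Ici) (le_of_lt hx : (0:ℝ) ≤ x) hx
  simp at this
  linarith

theorem stmt_3 (x : ℝ) (hx : 0 < x) :
    Real.sinh x / x < (Real.cosh (x / 3)) ^ (3 : ℝ) := by
  have h := aux_main x hx
  have : (Real.cosh (x / 3)) ^ (3 : ℝ) = (Real.cosh (x / 3)) ^ (3 : ℕ) := by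
    rw [← Real.rpow_natCast]; norm_num
  rw [this, div_lt_iff₀ hx]
  linarith [h]
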